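/- Let n ∈ ℤ_{−ε} with n ≠ 0 (so that π(ε,n) is indecomposable), and let ⟨·,·⟩ be any invariant Hermitian form on π(ε,n). Then ⟨·,·⟩ vanishes identically on every irreducible submodule of π(ε,n). Concretely: if n > 0 then ⟨v,w⟩ = 0 for all v, w ∈ span{v_j : j ≥ n+1} and for all v, w ∈ span{v_j : j ≤ −(n+1)}; if n < 0 then ⟨v,w⟩ = 0 for all v, w ∈ span{v_j : |j| ≤ −n−1}. -/

import Mathlib

namespace SL2Deform

/-- The index set `ℤ_ε = {j : ℤ | (-1)^j = ε}`, for a sign `ε ∈ {1, -1}`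
(i.e. a unit of `ℤ`). -/
abbrev idx (ε : ℤˣ) : Type := {j : ℤ // (-1 : ℤˣ) ^ j = ε}

/-- `V ε`: the complex vector space of finitely supported functions on `ℤ_ε`,
with standard basis `{v_j}`. -/
abbrev V (ε : ℤˣ) : Type := idx ε →₀ ℂ

/-- The standard basis vector `v_j` of `V ε`, for `j ∈ ℤ_ε`. -/
noncomputable def bv (ε : ℤˣ) (j : ℤ) (h : (-1 : ℤˣ) ^ j = ε) : V ε :=
  Finsupp.single ⟨j, h⟩ 1

lemma parity_two : (-1 : ℤˣ) ^ (2 : ℤ) = 1 := by decide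
lemma parity_neg_two : (-1 : ℤˣ) ^ (-2 : ℤ) = 1 := by decide
lemma parity_zero : (-1 : ℤˣ) ^ (0 : ℤ) = 1 := by decide

lemma parity_shift {ε : ℤˣ} {j : ℤ} (h : (-1 : ℤˣ) ^ j = ε) {s : ℤ}
    (hs : (-1 : ℤˣ) ^ s = 1) : (-1 : ℤˣ) ^ (j + s) = ε := by
  rw [zpow_add, h, hs, mul_one]

/-- If `m ∈ ℤ_{-ε}` then `m + 1 ∈ ℤ_ε`. -/
lemma parity_succ {ε : ℤˣ} {m : ℤ} (h : (-1 : ℤˣ) ^ m = -ε) :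
    (-1 : ℤˣ) ^ (m + 1) = ε := by
  rw [zpow_add, h, zpow_one]
  simp

/-- If `m ∈ ℤ_{-ε}` then `m - 1 ∈ ℤ_ε`. -/
lemma parity_pred {ε : ℤˣ} {m : ℤ} (h : (-1 : ℤˣ) ^ m = -ε) :
    (-1 : ℤˣ) ^ (m - 1) = ε := by
  rw [sub_eq_add_neg, zpow_add, h, zpow_neg, zpow_one]
  simp

/-- The linear operator on `V ε` sending `v_j` to `c j • v_{j+s}`,
for an even shift `s`. -/
noncomputable def shiftOp (ε : ℤˣ) (s : ℤ) (hs : (-1 : ℤˣ) ^ s = 1) (c : ℤ → ℂ) :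
    V ε →ₗ[ℂ] V ε :=
  Finsupp.lsum ℂ fun j =>
    LinearMap.toSpanSingleton ℂ (V ε)
      (Finsupp.single ⟨j.1 + s, parity_shift j.2 hs⟩ (c j.1))

/-- `H v_j = j • v_j`. -/
noncomputable def Hop (ε : ℤˣ) : V ε →ₗ[ℂ] V ε :=
  shiftOp ε 0 parity_zero fun j => (j : ℂ)

/-- Principal series: `E v_j = ½(ν + j + 1) • v_{j+2}`. -/
noncomputable def Eop (ε : ℤˣ) (ν : ℂ) : V ε →ₗ[ℂ] V ε :=
  shiftOp ε 2 parity_two fun j => (1 / 2 : ℂ) * (ν + j + 1)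

/-- Principal series: `F v_j = ½(ν - j + 1) • v_{j-2}`. -/
noncomputable def Fop (ε : ℤˣ) (ν : ℂ) : V ε →ₗ[ℂ] V ε :=
  shiftOp ε (-2) parity_neg_two fun j => (1 / 2 : ℂ) * (ν - j + 1)

/-- `f_m(ν) = ½ |ν²-m²|^{1/2} (ν+m)/|ν+m|` for `ν ≠ -m`, and `f_m(-m) = 0`. -/
noncomputable def fm (m : ℤ) (ν : ℂ) : ℂ :=
  if ν = -(m : ℂ) then 0
  else (1 / 2 : ℂ) * (Real.sqrt ‖ν ^ 2 - (m : ℂ) ^ 2‖ : ℝ) * (ν + m) /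
    (‖ν + (m : ℂ)‖ : ℝ)

/-- Deformed module: `E v_{m-1} = f_m(ν) • v_{m+1}`, i.e. `E v_j = f_{j+1}(ν) • v_{j+2}`. -/
noncomputable def PEop (ε : ℤˣ) (ν : ℂ) : V ε →ₗ[ℂ] V ε :=
  shiftOp ε 2 parity_two fun j => fm (j + 1) ν

/-- Deformed module: `F v_{m+1} = f_{-m}(ν) • v_{m-1}`, i.e. `F v_j = f_{-(j-1)}(ν) • v_{j-2}`. -/
noncomputable def PFop (ε : ℤˣ) (ν : ℂ) : V ε →ₗ[ℂ] V ε :=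
  shiftOp ε (-2) parity_neg_two fun j => fm (1 - j) ν

/-- The module `π'(ε,ν)`: `E v_{m-1} = ½(ν - |m|) • v_{m+1}`,
i.e. `E v_j = ½(ν - |j+1|) • v_{j+2}`. -/
noncomputable def E'op (ε : ℤˣ) (ν : ℂ) : V ε →ₗ[ℂ] V ε :=
  shiftOp ε 2 parity_two fun j => (1 / 2 : ℂ) * (ν - ((|j + 1| : ℤ) : ℂ))

/-- The module `π'(ε,ν)`: `F v_{m+1} = ½(ν + |m|) • v_{m-1}`,
i.e. `F v_j = ½(ν + |j-1|) • v_{j-2}`. -/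
noncomputable def F'op (ε : ℤˣ) (ν : ℂ) : V ε →ₗ[ℂ] V ε :=
  shiftOp ε (-2) parity_neg_two fun j => (1 / 2 : ℂ) * (ν + ((|j - 1| : ℤ) : ℂ))

/-- `ν ∈ ℤ_{-ε}`: `ν` is an integer with `(-1)^ν = -ε`. -/
def inZminus (ε : ℤˣ) (ν : ℂ) : Prop :=
  ∃ n : ℤ, ν = (n : ℂ) ∧ (-1 : ℤˣ) ^ n = -ε

section ModuleNotions

variable {M : Type*} [AddCommGroup M] [Module ℂ M]
variable {N : Type*} [AddCommGroup N] [Module ℂ N]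

/-- `W` is a submodule for the module with operators `A, B, C`: it is invariant
under all three operators. -/
def Invariant (A B C : M →ₗ[ℂ] M) (W : Submodule ℂ M) : Prop :=
  (∀ x ∈ W, A x ∈ W) ∧ (∀ x ∈ W, B x ∈ W) ∧ (∀ x ∈ W, C x ∈ W)

/-- The module with operators `A, B, C` is irreducible: its only submodules are
`0` and the whole space. -/
def IsIrreducibleRep (A B C : M →ₗ[ℂ] M) : Prop :=
  ∀ W : Submodule ℂ M, Invariant A B C W → W = ⊥ ∨ W = ⊤

/-- `W` is an irreducible submodule: invariant, nonzero, and with no nonzero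
proper invariant subspace. -/
def IsIrreducibleSubmodule (A B C : M →ₗ[ℂ] M) (W : Submodule ℂ M) : Prop :=
  Invariant A B C W ∧ W ≠ ⊥ ∧
    ∀ U : Submodule ℂ M, Invariant A B C U → U ≤ W → U = ⊥ ∨ U = W

/-- The module with operators `A, B, C` is completely reducible: every invariant
subspace has an invariant complement. -/
def CompletelyReducible (A B C : M →ₗ[ℂ] M) : Prop :=
  ∀ W : Submodule ℂ M, Invariant A B C W →
    ∃ U : Submodule ℂ M, Invariant A B C U ∧ IsCompl W U

/-- The two modules (given by operator triples) are isomorphic. -/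
def Intertwined (A B C : M →ₗ[ℂ] M) (A' B' C' : N →ₗ[ℂ] N) : Prop :=
  ∃ e : M ≃ₗ[ℂ] N, (∀ x, e (A x) = A' (e x)) ∧ (∀ x, e (B x) = B' (e x)) ∧
    (∀ x, e (C x) = C' (e x))

/-- An invariant Hermitian form for the module with operators `A, B, C`
(`A` playing the role of `H`, `B` of `E`, `C` of `F`): a sesquilinear form,
conjugate-symmetric, with `⟨Hv,w⟩ = ⟨v,Hw⟩`, `⟨Ev,w⟩ + ⟨v,Fw⟩ = 0`,
`⟨Fv,w⟩ + ⟨v,Ew⟩ = 0`. -/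
structure IsInvHermForm (A B C : M →ₗ[ℂ] M) (Φ : M → M → ℂ) : Prop where
  add_left : ∀ u v w, Φ (u + v) w = Φ u w + Φ v w
  smul_left : ∀ (a : ℂ) (v w : M), Φ (a • v) w = a * Φ v w
  conj_symm : ∀ v w, Φ w v = (starRingEnd ℂ) (Φ v w)
  inv_A : ∀ v w, Φ (A v) w = Φ v (A w)
  inv_BC : ∀ v w, Φ (B v) w + Φ v (C w) = 0
  inv_CB : ∀ v w, Φ (C v) w + Φ v (B w) = 0

end ModuleNotions

/-- `span{v_j : j ≥ n}`. -/
noncomputable def spanGE (ε : ℤˣ) (n : ℤ) : Submodule ℂ (V ε) :=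
  Submodule.span ℂ {x : V ε | ∃ j : idx ε, n ≤ j.1 ∧ x = Finsupp.single j 1}

/-- `span{v_j : j ≤ n}`. -/
noncomputable def spanLE (ε : ℤˣ) (n : ℤ) : Submodule ℂ (V ε) :=
  Submodule.span ℂ {x : V ε | ∃ j : idx ε, j.1 ≤ n ∧ x = Finsupp.single j 1}

/-- `span{v_j : |j| ≤ n}`. -/
noncomputable def spanAbsLE (ε : ℤˣ) (n : ℤ) : Submodule ℂ (V ε) :=
  Submodule.span ℂ {x : V ε | ∃ j : idx ε, |j.1| ≤ n ∧ x = Finsupp.single j 1}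

/-- The diagonal operator `S v_j = c j • v_j`. -/
noncomputable def diagMap (ε : ℤˣ) (c : idx ε → ℂ) : V ε →ₗ[ℂ] V ε :=
  Finsupp.lsum ℂ fun j => LinearMap.toSpanSingleton ℂ (V ε) (Finsupp.single j (c j))

section Test
variable {ε : ℤˣ}

lemma shiftOp_single (ε : ℤˣ) (s : ℤ) (hs : (-1:ℤˣ)^s = 1) (c : ℤ → ℂ) (j : idx ε) (a : ℂ) :
    shiftOp ε s hs c (Finsupp.single j a) =
      Finsupp.single ⟨j.1 + s, parity_shift j.2 hs⟩ (a * c j.1) := by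
  simp [shiftOp, Finsupp.smul_single]

lemma eps_ne_neg (ε : ℤˣ) : ε ≠ -ε := by
  rcases Int.units_eq_one_or ε with h|h <;> simp [h]

lemma neg_one_zpow_even {m : ℤ} (h : Even m) : (-1:ℤˣ)^m = 1 := by
  obtain ⟨k, rfl⟩ := h
  rw [← two_mul, zpow_mul, parity_two, one_zpow]

lemma even_of_parity_eq {a b : ℤ} (ha : (-1:ℤˣ)^a = ε) (hb : (-1:ℤˣ)^b = ε) :
    Even (a - b) := by
  by_contra hodd
  rw [Int.not_even_iff_odd] at hodd
  obtain ⟨k, hk⟩ := hodd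
  have : (-1:ℤˣ)^(a-b) = 1 := by
    rw [sub_eq_add_neg, zpow_add, ha, zpow_neg, hb]
    simp
  rw [hk, zpow_add, zpow_mul, parity_two, one_zpow] at this
  revert this; decide
end Test

section Test2
variable {ε : ℤˣ}

lemma Hop_single (j : idx ε) (a : ℂ) :
    Hop ε (Finsupp.single j a) = Finsupp.single j (a * (j.1:ℂ)) := by
  have e : (⟨j.1 + 0, parity_shift j.2 parity_zero⟩ : idx ε) = j := Subtype.ext (add_zero _)
  rw [Hop, shiftOp_single, e]

lemma Eop_single (ν : ℂ) (j : idx ε) (a : ℂ) :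
    Eop ε ν (Finsupp.single j a) =
      Finsupp.single ⟨j.1 + 2, parity_shift j.2 parity_two⟩ (a * ((1/2) * (ν + (j.1:ℂ) + 1))) := by
  rw [Eop, shiftOp_single]

lemma Fop_single (ν : ℂ) (j : idx ε) (a : ℂ) :
    Fop ε ν (Finsupp.single j a) =
      Finsupp.single ⟨j.1 + -2, parity_shift j.2 parity_neg_two⟩
        (a * ((1/2) * (ν - (j.1:ℂ) + 1))) := by
  rw [Fop, shiftOp_single]

lemma Hop_coord (v : V ε) (i : idx ε) : (Hop ε v) i = (i.1:ℂ) * v i := by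
  induction v using Finsupp.induction_linear with
  | zero => simp
  | add f g hf hg => simp [hf, hg]; ring
  | single j a =>
    rw [Hop_single]
    rcases eq_or_ne j i with rfl|h
    · simp [Finsupp.single_apply]; ring
    · simp [Finsupp.single_apply, h]

variable {Φ : V ε → V ε → ℂ} {A B C : V ε →ₗ[ℂ] V ε}

lemma form_zero_left (h : IsInvHermForm A B C Φ) (w : V ε) : Φ 0 w = 0 := by
  have h2 := h.smul_left 0 0 w; simpa using h2

lemma form_zero_right (h : IsInvHermForm A B C Φ) (v : V ε) : Φ v 0 = 0 := by
  rw [h.conj_symm, form_zero_left h]; simp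

lemma form_add_right (h : IsInvHermForm A B C Φ) (v u w : V ε) :
    Φ v (u + w) = Φ v u + Φ v w := by
  rw [h.conj_symm, h.add_left, map_add, ← h.conj_symm, ← h.conj_symm]

lemma form_smul_right (h : IsInvHermForm A B C Φ) (a : ℂ) (v w : V ε) :
    Φ v (a • w) = (starRingEnd ℂ) a * Φ v w := by
  rw [h.conj_symm, h.smul_left, map_mul, ← h.conj_symm]

lemma form_single_left (h : IsInvHermForm A B C Φ) (i : idx ε) (a : ℂ) (w : V ε) :
    Φ (Finsupp.single i a) w = a * Φ (Finsupp.single i 1) w := by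
  rw [show (Finsupp.single i a) = a • Finsupp.single i (1:ℂ) by simp, h.smul_left]

lemma form_single_right (h : IsInvHermForm A B C Φ) (j : idx ε) (a : ℂ) (v : V ε) :
    Φ v (Finsupp.single j a) = (starRingEnd ℂ) a * Φ v (Finsupp.single j 1) := by
  rw [show (Finsupp.single j a) = a • Finsupp.single j (1:ℂ) by simp, form_smul_right h]

lemma offdiag (h : IsInvHermForm (Hop ε) B C Φ) {i j : idx ε} (hij : i ≠ j) :
    Φ (Finsupp.single i 1) (Finsupp.single j 1) = 0 := by
  have h1 := h.inv_A (Finsupp.single i 1) (Finsupp.single j 1)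
  rw [Hop_single, Hop_single] at h1
  have hL : Φ (Finsupp.single i ((1:ℂ) * (i.1:ℂ))) (Finsupp.single j 1)
      = (i.1:ℂ) * Φ (Finsupp.single i 1) (Finsupp.single j 1) := by
    rw [form_single_left h]; ring
  have hR : Φ (Finsupp.single i 1) (Finsupp.single j ((1:ℂ) * (j.1:ℂ)))
      = (j.1:ℂ) * Φ (Finsupp.single i 1) (Finsupp.single j 1) := by
    rw [form_single_right h]; simp
  rw [hL, hR] at h1
  have hne : (i.1:ℂ) ≠ (j.1:ℂ) := by
    exact_mod_cast fun hc => hij (Subtype.ext (by exact_mod_cast hc))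
  have hz : ((i.1:ℂ) - j.1) * Φ (Finsupp.single i 1) (Finsupp.single j 1) = 0 := by
    linear_combination h1
  rcases mul_eq_zero.mp hz with h'|h'
  · exact absurd (sub_eq_zero.mp h') hne
  · exact h'

lemma recur {n : ℤ} (h : IsInvHermForm (Hop ε) (Eop ε (n:ℂ)) (Fop ε (n:ℂ)) Φ)
    (k : ℤ) (hk : (-1:ℤˣ)^k = ε) :
    ((n:ℂ) + k + 1) *
        Φ (Finsupp.single ⟨k+2, parity_shift hk parity_two⟩ 1)
          (Finsupp.single ⟨k+2, parity_shift hk parity_two⟩ 1)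
      = ((k:ℂ) + 1 - n) * Φ (Finsupp.single ⟨k,hk⟩ 1) (Finsupp.single ⟨k,hk⟩ 1) := by
  have h1 := h.inv_BC (Finsupp.single ⟨k,hk⟩ (1:ℂ))
      (Finsupp.single ⟨k+2, parity_shift hk parity_two⟩ (1:ℂ))
  rw [Eop_single, Fop_single] at h1
  have e : (⟨(⟨k+2, parity_shift hk parity_two⟩ : idx ε).1 + -2,
      parity_shift (parity_shift hk parity_two) parity_neg_two⟩ : idx ε) = ⟨k, hk⟩ :=
    Subtype.ext (by norm_num)
  rw [e] at h1
  have hL : Φ (Finsupp.single (⟨k+2, parity_shift hk parity_two⟩ : idx ε)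
        ((1:ℂ) * (1/2 * ((n:ℂ) + ((⟨k,hk⟩ : idx ε).1:ℂ) + 1))))
        (Finsupp.single (⟨k+2, parity_shift hk parity_two⟩ : idx ε) 1)
      = (1/2 * ((n:ℂ) + (k:ℂ) + 1)) *
        Φ (Finsupp.single (⟨k+2, parity_shift hk parity_two⟩ : idx ε) 1)
          (Finsupp.single (⟨k+2, parity_shift hk parity_two⟩ : idx ε) 1) := by
    rw [form_single_left h]; ring
  have hR : Φ (Finsupp.single (⟨k,hk⟩ : idx ε) 1)
        (Finsupp.single (⟨k,hk⟩ : idx ε)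
          ((1:ℂ) * (1/2 * ((n:ℂ) - ((⟨k+2, parity_shift hk parity_two⟩ : idx ε).1:ℂ) + 1))))
      = (1/2 * ((n:ℂ) - ((k:ℂ)+2) + 1)) *
        Φ (Finsupp.single (⟨k,hk⟩ : idx ε) 1) (Finsupp.single (⟨k,hk⟩ : idx ε) 1) := by
    rw [form_single_right h]
    have : (starRingEnd ℂ) ((1:ℂ) * (1/2 * ((n:ℂ) - (((k:ℤ)+2 : ℤ):ℂ) + 1)))
        = (1/2 * ((n:ℂ) - ((k:ℂ)+2) + 1)) := by
      simp [Complex.conj_ofNat]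
    rw [show ((⟨k+2, parity_shift hk parity_two⟩ : idx ε).1:ℂ) = (((k:ℤ)+2 : ℤ):ℂ) from rfl, this]
  rw [hL, hR] at h1
  linear_combination 2 * h1
end Test2
section Test3
variable {Φ : ∀ {ε : ℤˣ}, V ε → V ε → ℂ}

/-- diagonal value, total in k -/
noncomputable def dg (ε : ℤˣ) (Φ : V ε → V ε → ℂ) (k : ℤ) : ℂ :=
  if h : (-1:ℤˣ)^k = ε then Φ (Finsupp.single ⟨k,h⟩ 1) (Finsupp.single ⟨k,h⟩ 1) else 0

lemma dg_eq {ε : ℤˣ} (Φ : V ε → V ε → ℂ) {k : ℤ} (h : (-1:ℤˣ)^k = ε) :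
    dg ε Φ k = Φ (Finsupp.single ⟨k,h⟩ 1) (Finsupp.single ⟨k,h⟩ 1) := dif_pos h

section R
variable {ε : ℤˣ} {Φ : V ε → V ε → ℂ} {n : ℤ}

lemma recur' (h : IsInvHermForm (Hop ε) (Eop ε (n:ℂ)) (Fop ε (n:ℂ)) Φ)
    (k : ℤ) (hk : (-1:ℤˣ)^k = ε) :
    ((n:ℂ) + k + 1) * dg ε Φ (k+2) = ((k:ℂ) + 1 - n) * dg ε Φ k := by
  rw [dg_eq Φ hk, dg_eq Φ (parity_shift hk parity_two)]
  exact recur h k hk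

lemma dg_succ_zero (h : IsInvHermForm (Hop ε) (Eop ε (n:ℂ)) (Fop ε (n:ℂ)) Φ)
    (hn : (-1:ℤˣ)^n = -ε) (hne : n ≠ 0) : dg ε Φ (n+1) = 0 := by
  have h1 := recur' h (n-1) (parity_pred hn)
  rw [show n-1+2 = n+1 by ring] at h1
  have h3 : (((n:ℤ)-1:ℤ):ℂ) + 1 - n = 0 := by push_cast; ring
  rw [h3, zero_mul] at h1
  have h2 : ((n:ℂ) + ((n-1:ℤ):ℂ) + 1) ≠ 0 := by
    intro hc
    have h5 : ((2*n : ℤ):ℂ) = 0 := by rw [← hc]; push_cast; ring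
    have h6 : (2*n:ℤ) = 0 := by exact_mod_cast h5
    omega
  exact (mul_eq_zero.mp h1).resolve_left h2

lemma dg_up_zero (h : IsInvHermForm (Hop ε) (Eop ε (n:ℂ)) (Fop ε (n:ℂ)) Φ)
    (hn : (-1:ℤˣ)^n = -ε) (hpos : 0 < n) (t : ℕ) :
    dg ε Φ (n+1+2*(t:ℤ)) = 0 := by
  induction t with
  | zero => simpa using dg_succ_zero h hn hpos.ne'
  | succ s ih =>
    have hps : (-1:ℤˣ)^(n+1+2*(s:ℤ)) = ε := by
      have h0 := parity_succ hn
      exact parity_shift h0 (neg_one_zpow_even (⟨(s:ℤ), by ring⟩ : Even (2*(s:ℤ))))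
    have h1 := recur' h (n+1+2*(s:ℤ)) hps
    rw [ih, mul_zero, show n+1+2*(s:ℤ)+2 = n+1+2*((s+1:ℕ):ℤ) by push_cast; ring] at h1
    have hco : ((n:ℂ) + ((n+1+2*(s:ℤ)):ℂ) + 1) ≠ 0 := by
      intro hc
      have h5 : ((2*n+2+2*(s:ℤ) : ℤ):ℂ) = 0 := by rw [← hc]; push_cast; ring
      have h6 : (2*n+2+2*(s:ℤ):ℤ) = 0 := by exact_mod_cast h5
      omega
    exact (mul_eq_zero.mp h1).resolve_left (by exact_mod_cast hco)
end R
end Test3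
section Main
variable {ε : ℤˣ} {Φ : V ε → V ε → ℂ} {n : ℤ} {B C : V ε →ₗ[ℂ] V ε}

lemma parity_of_even_diff {a b : ℤ} (hb : (-1:ℤˣ)^b = ε) (h : Even (a - b)) :
    (-1:ℤˣ)^a = ε := by
  have := parity_shift hb (neg_one_zpow_even h)
  rwa [show b + (a - b) = a by ring] at this

lemma dg_neg_base (h : IsInvHermForm (Hop ε) (Eop ε (n:ℂ)) (Fop ε (n:ℂ)) Φ)
    (hn : (-1:ℤˣ)^n = -ε) (hne : n ≠ 0) : dg ε Φ (-(n+1)) = 0 := by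
  have hp : (-1:ℤˣ)^(-(n+1) : ℤ) = ε :=
    parity_of_even_diff (parity_succ hn) ⟨-(n+1), by ring⟩
  have h1 := recur' h (-(n+1)) hp
  have h2 : ((n:ℂ) + ((-(n+1) : ℤ):ℂ) + 1) = 0 := by push_cast; ring
  rw [h2, zero_mul] at h1
  have h3 : (((-(n+1):ℤ):ℂ) + 1 - n) ≠ 0 := by
    intro hc
    have h5 : ((-2*n : ℤ):ℂ) = 0 := by rw [← hc]; push_cast; ring
    have h6 : (-2*n : ℤ) = 0 := by exact_mod_cast h5
    omega
  exact (mul_eq_zero.mp h1.symm).resolve_left h3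

lemma dg_down_zero (h : IsInvHermForm (Hop ε) (Eop ε (n:ℂ)) (Fop ε (n:ℂ)) Φ)
    (hn : (-1:ℤˣ)^n = -ε) (hpos : 0 < n) (t : ℕ) :
    dg ε Φ (-(n+1) - 2*(t:ℤ)) = 0 := by
  induction t with
  | zero => simpa using dg_neg_base h hn hpos.ne'
  | succ s ih =>
    have hp : (-1:ℤˣ)^(-(n+1) - 2*((s:ℤ)+1)) = ε :=
      parity_of_even_diff (parity_succ hn) ⟨-(n+1) - (s:ℤ) - 1, by ring⟩
    have h1 := recur' h (-(n+1) - 2*((s:ℤ)+1)) hp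
    rw [show -(n+1) - 2*((s:ℤ)+1) + 2 = -(n+1) - 2*(s:ℤ) by ring, ih, mul_zero] at h1
    have h3 : (((-(n+1) - 2*((s:ℤ)+1) : ℤ):ℂ) + 1 - n) ≠ 0 := by
      intro hc
      have h5 : ((-2*n - 2*(s:ℤ) - 2 : ℤ):ℂ) = 0 := by rw [← hc]; push_cast; ring
      have h6 : (-2*n - 2*(s:ℤ) - 2 : ℤ) = 0 := by exact_mod_cast h5
      omega
    have h4 := (mul_eq_zero.mp h1.symm).resolve_left h3
    rw [show ((-(n+1) - 2*((s:ℤ)+1) : ℤ)) = -(n+1) - 2*((s+1:ℕ):ℤ) by push_cast; ring] at h4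
    exact h4

lemma dg_mid_zero (h : IsInvHermForm (Hop ε) (Eop ε (n:ℂ)) (Fop ε (n:ℂ)) Φ)
    (hn : (-1:ℤˣ)^n = -ε) (hneg : n < 0) (t : ℕ) (hle : n+1+2*(t:ℤ) ≤ -n-1) :
    dg ε Φ (n+1+2*(t:ℤ)) = 0 := by
  induction t with
  | zero => simpa using dg_succ_zero h hn hneg.ne
  | succ s ih =>
    have hps : (-1:ℤˣ)^(n+1+2*(s:ℤ)) = ε :=
      parity_of_even_diff (parity_succ hn) ⟨(s:ℤ), by ring⟩
    have hle' : n+1+2*(s:ℤ) ≤ -n-1 := by push_cast at hle ⊢; omega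
    have h1 := recur' h (n+1+2*(s:ℤ)) hps
    rw [ih hle', mul_zero, show n+1+2*(s:ℤ)+2 = n+1+2*((s+1:ℕ):ℤ) by push_cast; ring] at h1
    have hco : ((n:ℂ) + ((n+1+2*(s:ℤ)):ℂ) + 1) ≠ 0 := by
      intro hc
      have h5 : ((2*n+2+2*(s:ℤ) : ℤ):ℂ) = 0 := by rw [← hc]; push_cast; ring
      have h6 : (2*n+2+2*(s:ℤ):ℤ) = 0 := by exact_mod_cast h5
      push_cast at hle
      omega
    exact (mul_eq_zero.mp h1).resolve_left (by exact_mod_cast hco)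

/-- the radical region -/
def Reg (n k : ℤ) : Prop :=
  (0 < n ∧ (n+1 ≤ k ∨ k ≤ -(n+1))) ∨ (n < 0 ∧ n+1 ≤ k ∧ k ≤ -n-1)

lemma dg_region_zero (h : IsInvHermForm (Hop ε) (Eop ε (n:ℂ)) (Fop ε (n:ℂ)) Φ)
    (hn : (-1:ℤˣ)^n = -ε) {k : ℤ} (hk : (-1:ℤˣ)^k = ε) (hr : Reg n k) :
    dg ε Φ k = 0 := by
  have heven : Even (k - (n+1)) := even_of_parity_eq hk (parity_succ hn)
  rcases hr with ⟨hpos, hk1 | hk2⟩ | ⟨hneg, hk1, hk2⟩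
  · obtain ⟨c, hc⟩ := heven
    have hc' : k = n + 1 + 2 * c := by omega
    have hc0 : 0 ≤ c := by omega
    have := dg_up_zero h hn hpos c.toNat
    rwa [show n+1+2*((c.toNat:ℕ):ℤ) = k by rw [Int.toNat_of_nonneg hc0]; omega] at this
  · have heven' : Even (-(n+1) - k) := by
      obtain ⟨c, hc⟩ := heven; exact ⟨-(n+1) - c, by omega⟩
    obtain ⟨c, hc⟩ := heven'
    have hc0 : 0 ≤ c := by omega
    have := dg_down_zero h hn hpos c.toNat
    rwa [show -(n+1)-2*((c.toNat:ℕ):ℤ) = k by rw [Int.toNat_of_nonneg hc0]; omega] at this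
  · obtain ⟨c, hc⟩ := heven
    have hc0 : 0 ≤ c := by omega
    have := dg_mid_zero h hn hneg c.toNat
      (by rw [Int.toNat_of_nonneg hc0]; omega)
    rwa [show n+1+2*((c.toNat:ℕ):ℤ) = k by rw [Int.toNat_of_nonneg hc0]; omega] at this

lemma single_rad (h : IsInvHermForm (Hop ε) B C Φ) (j : idx ε)
    (hdiag : Φ (Finsupp.single j 1) (Finsupp.single j 1) = 0) (w : V ε) :
    Φ (Finsupp.single j 1) w = 0 := by
  induction w using Finsupp.induction_linear with
  | zero => exact form_zero_right h _
  | add f g hf hg => rw [form_add_right h, hf, hg, add_zero]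
  | single i a =>
    rw [form_single_right h]
    rcases eq_or_ne j i with rfl | hne
    · rw [hdiag, mul_zero]
    · rw [offdiag h hne, mul_zero]

lemma vanish_span (h : IsInvHermForm (Hop ε) B C Φ) (Q : idx ε → Prop)
    (hd : ∀ j : idx ε, Q j → Φ (Finsupp.single j 1) (Finsupp.single j 1) = 0) :
    ∀ v ∈ Submodule.span ℂ {x : V ε | ∃ j : idx ε, Q j ∧ x = Finsupp.single j 1},
      ∀ w, Φ v w = 0 := by
  intro v hv
  induction hv using Submodule.span_induction with
  | mem x hx => obtain ⟨j, hQ, rfl⟩ := hx; exact single_rad h j (hd j hQ)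
  | zero => exact fun w => form_zero_left h w
  | add x y hx hy ihx ihy => exact fun w => by rw [h.add_left, ihx w, ihy w, add_zero]
  | smul a x hx ihx => exact fun w => by rw [h.smul_left, ihx w, mul_zero]

end Main
section Climb
variable {ε : ℤˣ} {n : ℤ} {W : Submodule ℂ (V ε)}

lemma single_mem_congr {k k' : ℤ} {h : (-1:ℤˣ)^k = ε} {h' : (-1:ℤˣ)^k' = ε}
    (e : k = k') (hm : Finsupp.single (⟨k,h⟩ : idx ε) (1:ℂ) ∈ W) :
    Finsupp.single (⟨k',h'⟩ : idx ε) (1:ℂ) ∈ W := by subst e; exact hm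

lemma exists_single_mem (hH : ∀ x ∈ W, Hop ε x ∈ W)
    {v : V ε} (hv : v ∈ W) (hv0 : v ≠ 0) : ∃ j : idx ε, Finsupp.single j 1 ∈ W := by
  have key : ∀ N : ℕ, ∀ v : V ε, v ∈ W → v ≠ 0 → v.support.card ≤ N →
      ∃ j : idx ε, Finsupp.single j 1 ∈ W := by
    intro N
    induction N with
    | zero =>
      intro v hv hv0 hc
      exact absurd (Finsupp.support_eq_empty.mp (Finset.card_eq_zero.mp (Nat.le_zero.mp hc))) hv0
    | succ N ih =>
      intro v hv hv0 hc
      rcases Nat.lt_or_ge v.support.card (N+1) with hlt | hge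
      · exact ih v hv hv0 (Nat.lt_succ_iff.mp hlt)
      · rcases eq_or_lt_of_le (show 1 ≤ v.support.card by
          rcases Nat.eq_zero_or_pos v.support.card with h0 | h1
          · exact absurd (Finsupp.support_eq_empty.mp (Finset.card_eq_zero.mp h0)) hv0
          · exact h1) with h1 | h2
        · obtain ⟨j, ha, hveq⟩ := Finsupp.card_support_eq_one.mp h1.symm
          refine ⟨j, ?_⟩
          have : Finsupp.single j (1:ℂ) = (v j)⁻¹ • v := by
            nth_rewrite 2 [hveq]
            rw [Finsupp.smul_single, smul_eq_mul, inv_mul_cancel₀ ha]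
          rw [this]
          exact W.smul_mem _ hv
        · obtain ⟨j₀, hj₀, j₁, hj₁, hjne⟩ := Finset.one_lt_card.mp h2
          set w : V ε := Hop ε v - (j₁.1:ℂ) • v with hw
          have hwW : w ∈ W := W.sub_mem (hH v hv) (W.smul_mem _ hv)
          have hwc : ∀ i : idx ε, w i = ((i.1:ℂ) - j₁.1) * v i := by
            intro i
            rw [hw]
            simp [Hop_coord]
            ring
          have hw0 : w ≠ 0 := by
            intro hc0
            have := hwc j₀
            rw [hc0] at this
            simp only [Finsupp.coe_zero, Pi.zero_apply] at this
            have hvj₀ : v j₀ ≠ 0 := Finsupp.mem_support_iff.mp hj₀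
            have hne : ((j₀.1:ℂ) - j₁.1) ≠ 0 := by
              rw [sub_ne_zero]
              exact_mod_cast fun hc => hjne (Subtype.ext (by exact_mod_cast hc))
            exact (mul_ne_zero hne hvj₀) this.symm
          have hsub : w.support ⊆ v.support.erase j₁ := by
            intro i hi
            rw [Finset.mem_erase]
            have hwi : w i ≠ 0 := Finsupp.mem_support_iff.mp hi
            rw [hwc i] at hwi
            constructor
            · intro hc
              subst hc
              simp at hwi
            · exact Finsupp.mem_support_iff.mpr fun hc => hwi (by rw [hc, mul_zero])
          have hcard : w.support.card ≤ N := by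
            calc w.support.card ≤ (v.support.erase j₁).card := Finset.card_le_card hsub
            _ = v.support.card - 1 := Finset.card_erase_of_mem hj₁
            _ ≤ N := by omega
          exact ih w hwW hw0 hcard
  exact key v.support.card v hv hv0 le_rfl

lemma step_up (hB : ∀ x ∈ W, Eop ε (n:ℂ) x ∈ W) {k : ℤ} (hk : (-1:ℤˣ)^k = ε)
    (hm : Finsupp.single (⟨k,hk⟩ : idx ε) (1:ℂ) ∈ W) (hc : n + k + 1 ≠ 0) :
    Finsupp.single (⟨k+2, parity_shift hk parity_two⟩ : idx ε) (1:ℂ) ∈ W := by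
  have h1 := hB _ hm
  rw [Eop_single] at h1
  have hc' : ((1:ℂ) * (1/2 * ((n:ℂ) + k + 1))) ≠ 0 := by
    have : ((n:ℂ) + k + 1) ≠ 0 := by
      intro hcc
      have h5 : ((n+k+1 : ℤ):ℂ) = 0 := by rw [← hcc]; push_cast; ring
      exact hc (by exact_mod_cast h5)
    simp [this]
  have : Finsupp.single (⟨k+2, parity_shift hk parity_two⟩ : idx ε) (1:ℂ)
      = ((1:ℂ) * (1/2 * ((n:ℂ) + k + 1)))⁻¹ •
        Finsupp.single (⟨k+2, parity_shift hk parity_two⟩ : idx ε)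
          ((1:ℂ) * (1/2 * ((n:ℂ) + k + 1))) := by
    rw [Finsupp.smul_single, smul_eq_mul, inv_mul_cancel₀ hc']
  rw [this]
  exact W.smul_mem _ h1

lemma step_down (hC : ∀ x ∈ W, Fop ε (n:ℂ) x ∈ W) {k : ℤ} (hk : (-1:ℤˣ)^k = ε)
    (hm : Finsupp.single (⟨k,hk⟩ : idx ε) (1:ℂ) ∈ W) (hc : n - k + 1 ≠ 0) :
    Finsupp.single (⟨k + -2, parity_shift hk parity_neg_two⟩ : idx ε) (1:ℂ) ∈ W := by
  have h1 := hC _ hm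
  rw [Fop_single] at h1
  have hc' : ((1:ℂ) * (1/2 * ((n:ℂ) - k + 1))) ≠ 0 := by
    have : ((n:ℂ) - k + 1) ≠ 0 := by
      intro hcc
      have h5 : ((n-k+1 : ℤ):ℂ) = 0 := by rw [← hcc]; push_cast; ring
      exact hc (by exact_mod_cast h5)
    simp [this]
  have : Finsupp.single (⟨k + -2, parity_shift hk parity_neg_two⟩ : idx ε) (1:ℂ)
      = ((1:ℂ) * (1/2 * ((n:ℂ) - k + 1)))⁻¹ •
        Finsupp.single (⟨k + -2, parity_shift hk parity_neg_two⟩ : idx ε)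
          ((1:ℂ) * (1/2 * ((n:ℂ) - k + 1))) := by
    rw [Finsupp.smul_single, smul_eq_mul, inv_mul_cancel₀ hc']
  rw [this]
  exact W.smul_mem _ h1

lemma climb_up (hB : ∀ x ∈ W, Eop ε (n:ℂ) x ∈ W) (t : ℕ) :
    ∀ (k : ℤ) (hk : (-1:ℤˣ)^k = ε) (hk' : (-1:ℤˣ)^(k+2*(t:ℤ)) = ε),
      Finsupp.single (⟨k,hk⟩ : idx ε) (1:ℂ) ∈ W →
      (∀ s : ℕ, s < t → n + (k+2*(s:ℤ)) + 1 ≠ 0) →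
      Finsupp.single (⟨k+2*(t:ℤ), hk'⟩ : idx ε) (1:ℂ) ∈ W := by
  induction t with
  | zero => intro k hk hk' hm _; exact single_mem_congr (by ring) hm
  | succ s ih =>
    intro k hk hk' hm hco
    have hks : (-1:ℤˣ)^(k+2*(s:ℤ)) = ε := parity_of_even_diff hk ⟨(s:ℤ), by ring⟩
    have h1 := ih k hk hks hm (fun s' hs' => hco s' (Nat.lt_succ_of_lt hs'))
    have h2 := step_up hB hks h1 (hco s (Nat.lt_succ_self s))
    exact single_mem_congr (by push_cast; ring) h2

lemma climb_down (hC : ∀ x ∈ W, Fop ε (n:ℂ) x ∈ W) (t : ℕ) :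
    ∀ (k : ℤ) (hk : (-1:ℤˣ)^k = ε) (hk' : (-1:ℤˣ)^(k-2*(t:ℤ)) = ε),
      Finsupp.single (⟨k,hk⟩ : idx ε) (1:ℂ) ∈ W →
      (∀ s : ℕ, s < t → n - (k-2*(s:ℤ)) + 1 ≠ 0) →
      Finsupp.single (⟨k-2*(t:ℤ), hk'⟩ : idx ε) (1:ℂ) ∈ W := by
  induction t with
  | zero => intro k hk hk' hm _; exact single_mem_congr (by ring) hm
  | succ s ih =>
    intro k hk hk' hm hco
    have hks : (-1:ℤˣ)^(k-2*(s:ℤ)) = ε := parity_of_even_diff hk ⟨-(s:ℤ), by ring⟩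
    have h1 := ih k hk hks hm (fun s' hs' => hco s' (Nat.lt_succ_of_lt hs'))
    have h2 := step_down hC hks h1 (hco s (Nat.lt_succ_self s))
    exact single_mem_congr (by push_cast; ring) h2

end Climb
section Reach
variable {ε : ℤˣ} {n : ℤ} {W : Submodule ℂ (V ε)}

lemma parity_ne_n (hn : (-1:ℤˣ)^n = -ε) {k : ℤ} (hk : (-1:ℤˣ)^k = ε) :
    k ≠ n ∧ k ≠ -n := by
  constructor
  · rintro rfl; rw [hk] at hn; exact (eps_ne_neg ε) hn
  · rintro rfl
    rw [zpow_neg, hn] at hk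
    have : (-ε)⁻¹ = -ε := Int.units_inv_eq_self _
    rw [this] at hk
    exact (eps_ne_neg ε) hk.symm

lemma reach (hn : (-1:ℤˣ)^n = -ε) (hne : n ≠ 0)
    (hInv : Invariant (Hop ε) (Eop ε (n:ℂ)) (Fop ε (n:ℂ)) W)
    {k : ℤ} (hk : (-1:ℤˣ)^k = ε)
    (hm : Finsupp.single (⟨k,hk⟩ : idx ε) (1:ℂ) ∈ W) :
    ∃ (k' : ℤ) (hk' : (-1:ℤˣ)^k' = ε), Reg n k' ∧
      Finsupp.single (⟨k',hk'⟩ : idx ε) (1:ℂ) ∈ W := by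
  obtain ⟨hH, hB, hC⟩ := hInv
  obtain ⟨hkn, hknn⟩ := parity_ne_n hn hk
  rcases lt_or_gt_of_ne hne with hneg | hpos
  · -- n < 0
    by_cases hmid : n+1 ≤ k ∧ k ≤ -n-1
    · exact ⟨k, hk, Or.inr ⟨hneg, hmid.1, hmid.2⟩, hm⟩
    · rcases (by omega : k ≤ n-1 ∨ -n+1 ≤ k) with hlo | hhi
      · -- ascend to n+1
        have hpn1 : (-1:ℤˣ)^(n+1) = ε := parity_succ hn
        obtain ⟨c, hc⟩ := even_of_parity_eq hpn1 hk
        have hc0 : 0 ≤ c := by omega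
        set t : ℕ := c.toNat with ht
        have htz : (t:ℤ) = c := Int.toNat_of_nonneg hc0
        have hk' : (-1:ℤˣ)^(k+2*(t:ℤ)) = ε := parity_of_even_diff hk ⟨(t:ℤ), by ring⟩
        have hco : ∀ s : ℕ, s < t → n + (k+2*(s:ℤ)) + 1 ≠ 0 := by
          intro s hs
          have : (s:ℤ) < (t:ℤ) := by exact_mod_cast hs
          omega
        have := climb_up hB t k hk hk' hm hco
        refine ⟨k+2*(t:ℤ), hk', Or.inr ⟨hneg, by omega, by omega⟩, this⟩
      · -- descend to -n-1
        have hpn1 : (-1:ℤˣ)^(n+1) = ε := parity_succ hn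
        have hpm : (-1:ℤˣ)^(-n-1 : ℤ) = ε := parity_of_even_diff hpn1 ⟨-n-1, by ring⟩
        obtain ⟨c, hc⟩ := even_of_parity_eq hk hpm
        have hc0 : 0 ≤ c := by omega
        set t : ℕ := c.toNat with ht
        have htz : (t:ℤ) = c := Int.toNat_of_nonneg hc0
        have hk' : (-1:ℤˣ)^(k-2*(t:ℤ)) = ε := parity_of_even_diff hk ⟨-(t:ℤ), by ring⟩
        have hco : ∀ s : ℕ, s < t → n - (k-2*(s:ℤ)) + 1 ≠ 0 := by
          intro s hs
          have : (s:ℤ) < (t:ℤ) := by exact_mod_cast hs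
          omega
        have := climb_down hC t k hk hk' hm hco
        refine ⟨k-2*(t:ℤ), hk', Or.inr ⟨hneg, by omega, by omega⟩, this⟩
  · -- n > 0
    rcases le_or_gt k (-(n+1)) with hle | hgt
    · exact ⟨k, hk, Or.inl ⟨hpos, Or.inr hle⟩, hm⟩
    · have hkge : -n+1 ≤ k := by omega
      have hpn1 : (-1:ℤˣ)^(n+1) = ε := parity_succ hn
      obtain ⟨c, hc⟩ := even_of_parity_eq hpn1 hk
      set t : ℕ := c.toNat with ht
      have hk' : (-1:ℤˣ)^(k+2*(t:ℤ)) = ε := parity_of_even_diff hk ⟨(t:ℤ), by ring⟩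
      have hco : ∀ s : ℕ, s < t → n + (k+2*(s:ℤ)) + 1 ≠ 0 := by
        intro s hs
        have hs0 : (0:ℤ) ≤ (s:ℤ) := by positivity
        omega
      have hge : n+1 ≤ k + 2*(t:ℤ) := by
        rcases le_or_gt c 0 with h0 | h0
        · have : (t:ℤ) = 0 ∨ (t:ℤ) = c := by omega
          omega
        · have : (t:ℤ) = c := Int.toNat_of_nonneg h0.le
          omega
      have := climb_up hB t k hk hk' hm hco
      exact ⟨k+2*(t:ℤ), hk', Or.inl ⟨hpos, Or.inl hge⟩, this⟩
end Reach
/-- For `n ∈ ℤ_{-ε}`, `n ≠ 0` (so `π(ε,n)` is indecomposable), any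
invariant Hermitian form on `π(ε,n)` vanishes identically on every irreducible
submodule; concretely, for `n > 0` it vanishes on `span{v_j : j ≥ n+1}` and on
`span{v_j : j ≤ -(n+1)}`, and for `n < 0` on `span{v_j : |j| ≤ -n-1}`. -/
theorem principal_series_herm_form_radical (ε : ℤˣ) (n : ℤ)
    (hn : (-1 : ℤˣ) ^ n = -ε) (hne : n ≠ 0)
    (Φ : V ε → V ε → ℂ)
    (hΦ : IsInvHermForm (Hop ε) (Eop ε (n : ℂ)) (Fop ε (n : ℂ)) Φ) :
    (∀ W : Submodule ℂ (V ε),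
      IsIrreducibleSubmodule (Hop ε) (Eop ε (n : ℂ)) (Fop ε (n : ℂ)) W →
        ∀ v ∈ W, ∀ w ∈ W, Φ v w = 0) ∧
    (0 < n →
      (∀ v ∈ spanGE ε (n + 1), ∀ w ∈ spanGE ε (n + 1), Φ v w = 0) ∧
      (∀ v ∈ spanLE ε (-(n + 1)), ∀ w ∈ spanLE ε (-(n + 1)), Φ v w = 0)) ∧
    (n < 0 →
      ∀ v ∈ spanAbsLE ε (-n - 1), ∀ w ∈ spanAbsLE ε (-n - 1), Φ v w = 0) := by
  have hdiag : ∀ (j : idx ε), Reg n j.1 →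
      Φ (Finsupp.single j 1) (Finsupp.single j 1) = 0 := by
    intro j hr
    have h1 := dg_region_zero hΦ hn j.2 hr
    rwa [dg_eq Φ j.2] at h1
  refine ⟨?_, ?_, ?_⟩
  · -- part 1
    intro W hW v hv w hw
    obtain ⟨hInvW, hWne, hmin⟩ := hW
    set Rad : Submodule ℂ (V ε) :=
      { carrier := {v | ∀ w, Φ v w = 0}
        add_mem' := fun ha hb w => by rw [hΦ.add_left, ha w, hb w, add_zero]
        zero_mem' := fun w => form_zero_left hΦ w
        smul_mem' := fun a x hx w => by rw [hΦ.smul_left, hx w, mul_zero] } with hRad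
    have hRadMem : ∀ x, x ∈ Rad ↔ ∀ w, Φ x w = 0 := fun x => Iff.rfl
    have hRadInv : Invariant (Hop ε) (Eop ε (n:ℂ)) (Fop ε (n:ℂ)) Rad := by
      refine ⟨fun x hx w => ?_, fun x hx w => ?_, fun x hx w => ?_⟩
      · rw [hΦ.inv_A]; exact hx _
      · have h2 := hΦ.inv_BC x w
        rw [hx (Fop ε (n:ℂ) w), add_zero] at h2; exact h2
      · have h2 := hΦ.inv_CB x w
        rw [hx (Eop ε (n:ℂ) w), add_zero] at h2; exact h2
    have hUinv : Invariant (Hop ε) (Eop ε (n:ℂ)) (Fop ε (n:ℂ)) (W ⊓ Rad) := by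
      refine ⟨fun x hx => ?_, fun x hx => ?_, fun x hx => ?_⟩
      · exact ⟨hInvW.1 x hx.1, hRadInv.1 x hx.2⟩
      · exact ⟨hInvW.2.1 x hx.1, hRadInv.2.1 x hx.2⟩
      · exact ⟨hInvW.2.2 x hx.1, hRadInv.2.2 x hx.2⟩
    rcases hmin _ hUinv inf_le_left with hbot | heq
    · exfalso
      obtain ⟨x, hxW, hx0⟩ := Submodule.exists_mem_ne_zero_of_ne_bot hWne
      obtain ⟨j, hj⟩ := exists_single_mem hInvW.1 hxW hx0
      obtain ⟨k', hk', hreg, hmem⟩ := reach hn hne hInvW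
        (k := j.1) j.2 (by
          have : (⟨j.1, j.2⟩ : idx ε) = j := rfl
          rw [this]; exact hj)
      have hrad : Finsupp.single (⟨k',hk'⟩ : idx ε) (1:ℂ) ∈ Rad :=
        fun w => single_rad hΦ _ (hdiag ⟨k',hk'⟩ hreg) w
      have hmemU : Finsupp.single (⟨k',hk'⟩ : idx ε) (1:ℂ) ∈ W ⊓ Rad := ⟨hmem, hrad⟩
      rw [hbot, Submodule.mem_bot] at hmemU
      exact absurd hmemU (by simp)
    · exact (heq.ge hv).2 w
  · -- part 2 : 0 < n
    intro hpos
    constructor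
    · intro v hv w _
      exact vanish_span hΦ (fun j : idx ε => n+1 ≤ j.1)
        (fun j hQ => hdiag j (Or.inl ⟨hpos, Or.inl hQ⟩)) v hv w
    · intro v hv w _
      exact vanish_span hΦ (fun j : idx ε => j.1 ≤ -(n+1))
        (fun j hQ => hdiag j (Or.inl ⟨hpos, Or.inr hQ⟩)) v hv w
  · -- part 3 : n < 0
    intro hneg v hv w _
    exact vanish_span hΦ (fun j : idx ε => |j.1| ≤ -n-1)
      (fun j hQ => hdiag j (Or.inr ⟨hneg, by
        have := abs_le.mp hQ; omega, (abs_le.mp hQ).2⟩)) v hv w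

end SL2Deform
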